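/- Let k ∈ ℝ, k ≠ 0, λ ∈ ℝ, and let ψ₁, ψ₂ : ℝ → ℝ be twice-differentiable solutions of the Hermite equation φ″(t) = (t² − 2λ)·φ(t) whose Wronskian satisfies ψ₁(t)ψ₂′(t) − ψ₂(t)ψ₁′(t) = W for all t, for a nonzero constant W. Define ψ : ℝ² → ℂ⁴ by ψ(x,y) = (e^{ikx}ψ₁(y+k), e^{−ikx}ψ₁(y−k), e^{−ikx}ψ₂(y−k)/(2ikW), e^{ikx}ψ₂(y+k)/(2ikW)). Then, with respect to the pseudo-Hermitian form ⟨a,b⟩ = −a₀·conj(b₃) + a₁·conj(b₂) + a₂·conj(b₁) − a₃·conj(b₀) on ℂ⁴, at every point: ⟨∂_xψ, ∂_yψ⟩ = ⟨∂_yψ, ∂_xψ⟩ = 1, ⟨ψ, ∂_x∂_yψ⟩ = ⟨∂_x∂_yψ, ψ⟩ = −1, all other pseudo-Hermitian products among the four vectors ψ, ∂_xψ, ∂_yψ, ∂_x∂_yψ vanish, and the determinant of the 4×4 matrix with rows ψ, ∂_xψ, ∂_yψ, ∂_x∂_yψ equals −1. -/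

import Mathlib

open Complex ComplexConjugate

noncomputable section

/-- Partial derivative in the first variable of a two-variable function. -/
def pd1 {E : Type*} [NormedAddCommGroup E] [NormedSpace ℝ E]
    (f : ℝ → ℝ → E) (x y : ℝ) : E := deriv (fun t => f t y) x

/-- Partial derivative in the second variable of a two-variable function. -/
def pd2 {E : Type*} [NormedAddCommGroup E] [NormedSpace ℝ E]
    (f : ℝ → ℝ → E) (x y : ℝ) : E := deriv (fun t => f x t) y

/-- The pseudo-Hermitian form of signature (2,2) on ℂ⁴:
`⟨a,b⟩ = −a₀·conj(b₃) + a₁·conj(b₂) + a₂·conj(b₁) − a₃·conj(b₀)`. -/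
def herm4 (a b : Fin 4 → ℂ) : ℂ :=
  -(a 0 * conj (b 3)) + a 1 * conj (b 2) + a 2 * conj (b 1) - a 3 * conj (b 0)

/-- The wedge product of two vectors of ℂ⁴, as a vector in ℂ⁶, in the explicit
coordinates `y₀ = (p₀₂ − p₃₁)/2, y₁ = (p₀₂ + p₃₁)/2, y₂ = (p₀₃ + p₁₂)/2,
y₃ = (p₀₃ − p₁₂)/(2i), y₄ = (p₀₁ − p₂₃)/(2i), y₅ = (p₀₁ + p₂₃)/(2i)`,
where `p_{ij} = aᵢbⱼ − aⱼbᵢ`. -/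
def wedgeC (a b : Fin 4 → ℂ) : Fin 6 → ℂ :=
  ![((a 0 * b 2 - a 2 * b 0) - (a 3 * b 1 - a 1 * b 3)) / 2,
    ((a 0 * b 2 - a 2 * b 0) + (a 3 * b 1 - a 1 * b 3)) / 2,
    ((a 0 * b 3 - a 3 * b 0) + (a 1 * b 2 - a 2 * b 1)) / 2,
    ((a 0 * b 3 - a 3 * b 0) - (a 1 * b 2 - a 2 * b 1)) / (2 * Complex.I),
    ((a 0 * b 1 - a 1 * b 0) - (a 2 * b 3 - a 3 * b 2)) / (2 * Complex.I),
    ((a 0 * b 1 - a 1 * b 0) + (a 2 * b 3 - a 3 * b 2)) / (2 * Complex.I)]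

/-- The real bilinear form of signature (4,2) on ℝ⁶ (the Lie quadric form). -/
def Q6 (x y : Fin 6 → ℝ) : ℝ :=
  -(x 0 * y 0) + x 1 * y 1 + x 2 * y 2 + x 3 * y 3 + x 4 * y 4 - x 5 * y 5

/-- The pseudo-Hermitian form of signature (4,2) on ℂ⁶. -/
def herm6 (x y : Fin 6 → ℂ) : ℂ :=
  -(x 0 * conj (y 0)) + x 1 * conj (y 1) + x 2 * conj (y 2) + x 3 * conj (y 3)
    + x 4 * conj (y 4) - x 5 * conj (y 5)

/-- The complex bilinear form on ℂ⁶. -/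
def bil6 (x y : Fin 6 → ℂ) : ℂ :=
  -(x 0 * y 0) + x 1 * y 1 + x 2 * y 2 + x 3 * y 3 + x 4 * y 4 - x 5 * y 5

/-- The Euclidean dot product on ℝ³. -/
def dot3 (u v : Fin 3 → ℝ) : ℝ := u 0 * v 0 + u 1 * v 1 + u 2 * v 2

/-- The Schwarzian derivative `S(h) = h‴/h′ − (3/2)(h″/h′)²`. -/
def schwarzian (h : ℝ → ℝ) (x : ℝ) : ℝ :=
  deriv (deriv (deriv h)) x / deriv h x - (3/2) * (deriv (deriv h) x / deriv h x) ^ 2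

/-- `(∂₁ + c)² u`, an abbreviation for `∂₁(∂₁u + c·u) + c·(∂₁u + c·u)`. -/
def msq1 (c u : ℝ → ℝ → ℂ) : ℝ → ℝ → ℂ := fun x y =>
  pd1 (fun x' y' => pd1 u x' y' + c x' y' * u x' y') x y
    + c x y * (pd1 u x y + c x y * u x y)

/-- `(∂₂ + c)² u`, an abbreviation for `∂₂(∂₂u + c·u) + c·(∂₂u + c·u)`. -/
def msq2 (c u : ℝ → ℝ → ℂ) : ℝ → ℝ → ℂ := fun x y =>
  pd2 (fun x' y' => pd2 u x' y' + c x' y' * u x' y') x y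
    + c x y * (pd2 u x y + c x y * u x y)

/-- The real part map `U = −2·Im(ψ ∧ ∂₁ψ)` used to define the first curvature sphere. -/
def Uvec (ψ : ℝ → ℝ → Fin 4 → ℂ) : ℝ → ℝ → Fin 6 → ℝ :=
  fun x y i => -2 * (wedgeC (ψ x y) (pd1 ψ x y) i).im

/-- The real part map `S = 2·Re(ψ ∧ ∂₂ψ)` used to define the second curvature sphere. -/
def Svec (ψ : ℝ → ℝ → Fin 4 → ℂ) : ℝ → ℝ → Fin 6 → ℝ :=
  fun x y i => 2 * (wedgeC (ψ x y) (pd2 ψ x y) i).re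

lemma pd1_formula (k : ℝ) (D : ℂ) (f : ℝ → ℝ → Fin 4 → ℂ) (u v w z : ℝ → ℂ)
    (hf : ∀ x y, f x y = ![Complex.exp (Complex.I * k * x) * u y,
      Complex.exp (-(Complex.I * k * x)) * v y,
      Complex.exp (-(Complex.I * k * x)) * w y / D,
      Complex.exp (Complex.I * k * x) * z y / D]) (x y : ℝ) :
    pd1 f x y = ![Complex.I * k * (Complex.exp (Complex.I * k * x) * u y),
      -(Complex.I * k) * (Complex.exp (-(Complex.I * k * x)) * v y),
      -(Complex.I * k) * (Complex.exp (-(Complex.I * k * x)) * w y) / D,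
      Complex.I * k * (Complex.exp (Complex.I * k * x) * z y) / D] := by
  have hfun : (fun t => f t y) = fun t : ℝ => ![Complex.exp (Complex.I * k * t) * u y,
      Complex.exp (-(Complex.I * k * t)) * v y,
      Complex.exp (-(Complex.I * k * t)) * w y / D,
      Complex.exp (Complex.I * k * t) * z y / D] := funext fun t => hf t y
  have hpos : ∀ (a : ℂ), HasDerivAt (fun t : ℝ => Complex.exp (Complex.I * k * t) * a)
      (Complex.I * k * (Complex.exp (Complex.I * k * x) * a)) x := by
    intro a
    have h := ((((hasDerivAt_id x).ofReal_comp).const_mul (Complex.I * k)).cexp).mul_const a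
    convert h using 1
    · rfl
    · simp only [id_eq]
    simp only [id_eq, Complex.ofReal_one]; ring
  have hneg : ∀ (a : ℂ), HasDerivAt (fun t : ℝ => Complex.exp (-(Complex.I * k * t)) * a)
      (-(Complex.I * k) * (Complex.exp (-(Complex.I * k * x)) * a)) x := by
    intro a
    have h := (((((hasDerivAt_id x).ofReal_comp).const_mul (Complex.I * k)).neg).cexp).mul_const a
    convert h using 1
    · rfl
    · simp only [id_eq, Pi.neg_apply]
    simp only [id_eq, Pi.neg_apply, Complex.ofReal_one]; ring
  unfold pd1
  rw [hfun]
  apply HasDerivAt.deriv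
  rw [hasDerivAt_pi]
  intro i
  fin_cases i
  · simpa using hpos (u y)
  · simpa using hneg (v y)
  · simpa using (hneg (w y)).div_const D
  · simpa using (hpos (z y)).div_const D


lemma pd2_formula (k : ℝ) (D : ℂ) (f : ℝ → ℝ → Fin 4 → ℂ) (g₁ g₂ : ℝ → ℝ)
    (hg₁ : Differentiable ℝ g₁) (hg₂ : Differentiable ℝ g₂)
    (hf : ∀ x y, f x y = ![Complex.exp (Complex.I * k * x) * ((g₁ (y + k) : ℝ) : ℂ),
      Complex.exp (-(Complex.I * k * x)) * ((g₁ (y - k) : ℝ) : ℂ),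
      Complex.exp (-(Complex.I * k * x)) * ((g₂ (y - k) : ℝ) : ℂ) / D,
      Complex.exp (Complex.I * k * x) * ((g₂ (y + k) : ℝ) : ℂ) / D]) (x y : ℝ) :
    pd2 f x y = ![Complex.exp (Complex.I * k * x) * ((deriv g₁ (y + k) : ℝ) : ℂ),
      Complex.exp (-(Complex.I * k * x)) * ((deriv g₁ (y - k) : ℝ) : ℂ),
      Complex.exp (-(Complex.I * k * x)) * ((deriv g₂ (y - k) : ℝ) : ℂ) / D,
      Complex.exp (Complex.I * k * x) * ((deriv g₂ (y + k) : ℝ) : ℂ) / D] := by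
  have hfun : (fun t => f x t) = fun t : ℝ => ![Complex.exp (Complex.I * k * x) * ((g₁ (t + k) : ℝ) : ℂ),
      Complex.exp (-(Complex.I * k * x)) * ((g₁ (t - k) : ℝ) : ℂ),
      Complex.exp (-(Complex.I * k * x)) * ((g₂ (t - k) : ℝ) : ℂ) / D,
      Complex.exp (Complex.I * k * x) * ((g₂ (t + k) : ℝ) : ℂ) / D] := funext fun t => hf x t
  have key : ∀ (g : ℝ → ℝ), Differentiable ℝ g → ∀ (c : ℝ) (E : ℂ),
      HasDerivAt (fun t : ℝ => E * ((g (t + c) : ℝ) : ℂ)) (E * ((deriv g (y + c) : ℝ) : ℂ)) y := by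
    intro g hg c E
    have h1 : HasDerivAt (fun t : ℝ => g (t + c)) (deriv g (y + c)) y := by
      simpa [Function.comp_def] using (hg (y + c)).hasDerivAt.comp y ((hasDerivAt_id y).add_const c)
    simpa using (h1.ofReal_comp).const_mul E
  have keysub : ∀ (g : ℝ → ℝ), Differentiable ℝ g → ∀ (E : ℂ),
      HasDerivAt (fun t : ℝ => E * ((g (t - k) : ℝ) : ℂ)) (E * ((deriv g (y - k) : ℝ) : ℂ)) y := by
    intro g hg E
    simpa [sub_eq_add_neg] using key g hg (-k) E
  unfold pd2
  rw [hfun]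
  apply HasDerivAt.deriv
  rw [hasDerivAt_pi]
  intro i
  fin_cases i
  · simpa using key g₁ hg₁ k _
  · simpa using keysub g₁ hg₁ _
  · simpa using (keysub g₂ hg₂ _).div_const D
  · simpa using (key g₂ hg₂ k _).div_const D


set_option maxHeartbeats 2000000 in
lemma gram_calc (k Wr x : ℝ) (hk : k ≠ 0) (hWr : Wr ≠ 0) (a b c d a' b' c' d' : ℝ)
    (hW1 : (a:ℂ) * d' - (d:ℂ) * a' = (Wr:ℂ)) (hW2 : (b:ℂ) * c' - (c:ℂ) * b' = (Wr:ℂ))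
    (i j : Fin 4) :
    herm4
      (![![Complex.exp (Complex.I * k * x) * (a:ℂ),
          Complex.exp (-(Complex.I * k * x)) * (b:ℂ),
          Complex.exp (-(Complex.I * k * x)) * (c:ℂ) / (2 * Complex.I * k * Wr),
          Complex.exp (Complex.I * k * x) * (d:ℂ) / (2 * Complex.I * k * Wr)],
        ![Complex.I * k * (Complex.exp (Complex.I * k * x) * (a:ℂ)),
          -(Complex.I * k) * (Complex.exp (-(Complex.I * k * x)) * (b:ℂ)),
          -(Complex.I * k) * (Complex.exp (-(Complex.I * k * x)) * (c:ℂ)) / (2 * Complex.I * k * Wr),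
          Complex.I * k * (Complex.exp (Complex.I * k * x) * (d:ℂ)) / (2 * Complex.I * k * Wr)],
        ![Complex.exp (Complex.I * k * x) * (a':ℂ),
          Complex.exp (-(Complex.I * k * x)) * (b':ℂ),
          Complex.exp (-(Complex.I * k * x)) * (c':ℂ) / (2 * Complex.I * k * Wr),
          Complex.exp (Complex.I * k * x) * (d':ℂ) / (2 * Complex.I * k * Wr)],
        ![Complex.I * k * (Complex.exp (Complex.I * k * x) * (a':ℂ)),
          -(Complex.I * k) * (Complex.exp (-(Complex.I * k * x)) * (b':ℂ)),
          -(Complex.I * k) * (Complex.exp (-(Complex.I * k * x)) * (c':ℂ)) / (2 * Complex.I * k * Wr),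
          Complex.I * k * (Complex.exp (Complex.I * k * x) * (d':ℂ)) / (2 * Complex.I * k * Wr)]] i)
      (![![Complex.exp (Complex.I * k * x) * (a:ℂ),
          Complex.exp (-(Complex.I * k * x)) * (b:ℂ),
          Complex.exp (-(Complex.I * k * x)) * (c:ℂ) / (2 * Complex.I * k * Wr),
          Complex.exp (Complex.I * k * x) * (d:ℂ) / (2 * Complex.I * k * Wr)],
        ![Complex.I * k * (Complex.exp (Complex.I * k * x) * (a:ℂ)),
          -(Complex.I * k) * (Complex.exp (-(Complex.I * k * x)) * (b:ℂ)),
          -(Complex.I * k) * (Complex.exp (-(Complex.I * k * x)) * (c:ℂ)) / (2 * Complex.I * k * Wr),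
          Complex.I * k * (Complex.exp (Complex.I * k * x) * (d:ℂ)) / (2 * Complex.I * k * Wr)],
        ![Complex.exp (Complex.I * k * x) * (a':ℂ),
          Complex.exp (-(Complex.I * k * x)) * (b':ℂ),
          Complex.exp (-(Complex.I * k * x)) * (c':ℂ) / (2 * Complex.I * k * Wr),
          Complex.exp (Complex.I * k * x) * (d':ℂ) / (2 * Complex.I * k * Wr)],
        ![Complex.I * k * (Complex.exp (Complex.I * k * x) * (a':ℂ)),
          -(Complex.I * k) * (Complex.exp (-(Complex.I * k * x)) * (b':ℂ)),
          -(Complex.I * k) * (Complex.exp (-(Complex.I * k * x)) * (c':ℂ)) / (2 * Complex.I * k * Wr),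
          Complex.I * k * (Complex.exp (Complex.I * k * x) * (d':ℂ)) / (2 * Complex.I * k * Wr)]] j)
      = !![(0:ℂ), 0, 0, -1; 0, 0, 1, 0; 0, 1, 0, 0; -1, 0, 0, 0] i j := by
  have hEF : Complex.exp (Complex.I * k * x) * Complex.exp (-(Complex.I * k * x)) = 1 := by
    rw [← Complex.exp_add]; simp
  have hcE : (starRingEnd ℂ) (Complex.exp (Complex.I * k * x)) = Complex.exp (-(Complex.I * k * x)) := by
    rw [← Complex.exp_conj]; congr 1; simp
  have hcF : (starRingEnd ℂ) (Complex.exp (-(Complex.I * k * x))) = Complex.exp (Complex.I * k * x) := by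
    rw [← Complex.exp_conj]; congr 1; simp
  have hk' : (k:ℂ) ≠ 0 := Complex.ofReal_ne_zero.mpr hk
  have hWr' : (Wr:ℂ) ≠ 0 := Complex.ofReal_ne_zero.mpr hWr
  have hn : (2 * Complex.I * (k:ℂ) * (Wr:ℂ)) ≠ 0 := by
    simp [Complex.I_ne_zero, hk', hWr']
  fin_cases i <;> fin_cases j
  · simp only [Fin.zero_eta, Fin.mk_one, Fin.reduceFinMk, herm4, Matrix.cons_val_zero,
      Matrix.cons_val_one, Matrix.head_cons, Matrix.cons_val_two, Matrix.tail_cons,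
      Matrix.cons_val_three, Matrix.of_apply, map_mul, map_div₀, map_neg, map_ofNat,
      Complex.conj_ofReal, Complex.conj_I, hcE, hcF, mul_neg, neg_mul, div_neg, neg_neg,
      ← mul_div_assoc, div_mul_eq_mul_div, ← sub_div, ← add_div, ← neg_div]
    rw [div_eq_iff hn]
    ring
  · simp only [Fin.zero_eta, Fin.mk_one, Fin.reduceFinMk, herm4, Matrix.cons_val_zero,
      Matrix.cons_val_one, Matrix.head_cons, Matrix.cons_val_two, Matrix.tail_cons,
      Matrix.cons_val_three, Matrix.of_apply, map_mul, map_div₀, map_neg, map_ofNat,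
      Complex.conj_ofReal, Complex.conj_I, hcE, hcF, mul_neg, neg_mul, div_neg, neg_neg,
      ← mul_div_assoc, div_mul_eq_mul_div, ← sub_div, ← add_div, ← neg_div]
    rw [div_eq_iff hn]
    ring
  · simp only [Fin.zero_eta, Fin.mk_one, Fin.reduceFinMk, herm4, Matrix.cons_val_zero,
      Matrix.cons_val_one, Matrix.head_cons, Matrix.cons_val_two, Matrix.tail_cons,
      Matrix.cons_val_three, Matrix.of_apply, map_mul, map_div₀, map_neg, map_ofNat,
      Complex.conj_ofReal, Complex.conj_I, hcE, hcF, mul_neg, neg_mul, div_neg, neg_neg,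
      ← mul_div_assoc, div_mul_eq_mul_div, ← sub_div, ← add_div, ← neg_div]
    rw [div_eq_iff hn]
    linear_combination (Complex.exp (Complex.I * k * x) * Complex.exp (-(Complex.I * k * x))) * hW1 - (Complex.exp (Complex.I * k * x) * Complex.exp (-(Complex.I * k * x))) * hW2
  · simp only [Fin.zero_eta, Fin.mk_one, Fin.reduceFinMk, herm4, Matrix.cons_val_zero,
      Matrix.cons_val_one, Matrix.head_cons, Matrix.cons_val_two, Matrix.tail_cons,
      Matrix.cons_val_three, Matrix.of_apply, map_mul, map_div₀, map_neg, map_ofNat,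
      Complex.conj_ofReal, Complex.conj_I, hcE, hcF, mul_neg, neg_mul, div_neg, neg_neg,
      ← mul_div_assoc, div_mul_eq_mul_div, ← sub_div, ← add_div, ← neg_div]
    rw [div_eq_iff hn]
    linear_combination (-(Complex.I * (k:ℂ)) * (Complex.exp (Complex.I * k * x) * Complex.exp (-(Complex.I * k * x)))) * hW1 + (-(Complex.I * (k:ℂ)) * (Complex.exp (Complex.I * k * x) * Complex.exp (-(Complex.I * k * x)))) * hW2 + (-(2 * Complex.I * (k:ℂ) * (Wr:ℂ))) * hEF
  · simp only [Fin.zero_eta, Fin.mk_one, Fin.reduceFinMk, herm4, Matrix.cons_val_zero,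
      Matrix.cons_val_one, Matrix.head_cons, Matrix.cons_val_two, Matrix.tail_cons,
      Matrix.cons_val_three, Matrix.of_apply, map_mul, map_div₀, map_neg, map_ofNat,
      Complex.conj_ofReal, Complex.conj_I, hcE, hcF, mul_neg, neg_mul, div_neg, neg_neg,
      ← mul_div_assoc, div_mul_eq_mul_div, ← sub_div, ← add_div, ← neg_div]
    rw [div_eq_iff hn]
    ring
  · simp only [Fin.zero_eta, Fin.mk_one, Fin.reduceFinMk, herm4, Matrix.cons_val_zero,
      Matrix.cons_val_one, Matrix.head_cons, Matrix.cons_val_two, Matrix.tail_cons,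
      Matrix.cons_val_three, Matrix.of_apply, map_mul, map_div₀, map_neg, map_ofNat,
      Complex.conj_ofReal, Complex.conj_I, hcE, hcF, mul_neg, neg_mul, div_neg, neg_neg,
      ← mul_div_assoc, div_mul_eq_mul_div, ← sub_div, ← add_div, ← neg_div]
    rw [div_eq_iff hn]
    ring
  · simp only [Fin.zero_eta, Fin.mk_one, Fin.reduceFinMk, herm4, Matrix.cons_val_zero,
      Matrix.cons_val_one, Matrix.head_cons, Matrix.cons_val_two, Matrix.tail_cons,
      Matrix.cons_val_three, Matrix.of_apply, map_mul, map_div₀, map_neg, map_ofNat,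
      Complex.conj_ofReal, Complex.conj_I, hcE, hcF, mul_neg, neg_mul, div_neg, neg_neg,
      ← mul_div_assoc, div_mul_eq_mul_div, ← sub_div, ← add_div, ← neg_div]
    rw [div_eq_iff hn]
    linear_combination ((Complex.I * (k:ℂ)) * (Complex.exp (Complex.I * k * x) * Complex.exp (-(Complex.I * k * x)))) * hW1 + ((Complex.I * (k:ℂ)) * (Complex.exp (Complex.I * k * x) * Complex.exp (-(Complex.I * k * x)))) * hW2 + (2 * Complex.I * (k:ℂ) * (Wr:ℂ)) * hEF
  · simp only [Fin.zero_eta, Fin.mk_one, Fin.reduceFinMk, herm4, Matrix.cons_val_zero,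
      Matrix.cons_val_one, Matrix.head_cons, Matrix.cons_val_two, Matrix.tail_cons,
      Matrix.cons_val_three, Matrix.of_apply, map_mul, map_div₀, map_neg, map_ofNat,
      Complex.conj_ofReal, Complex.conj_I, hcE, hcF, mul_neg, neg_mul, div_neg, neg_neg,
      ← mul_div_assoc, div_mul_eq_mul_div, ← sub_div, ← add_div, ← neg_div]
    rw [div_eq_iff hn]
    linear_combination (-(Complex.I^2) * (k:ℂ)^2 * (Complex.exp (Complex.I * k * x) * Complex.exp (-(Complex.I * k * x)))) * hW1 + (Complex.I^2 * (k:ℂ)^2 * (Complex.exp (Complex.I * k * x) * Complex.exp (-(Complex.I * k * x)))) * hW2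
  · simp only [Fin.zero_eta, Fin.mk_one, Fin.reduceFinMk, herm4, Matrix.cons_val_zero,
      Matrix.cons_val_one, Matrix.head_cons, Matrix.cons_val_two, Matrix.tail_cons,
      Matrix.cons_val_three, Matrix.of_apply, map_mul, map_div₀, map_neg, map_ofNat,
      Complex.conj_ofReal, Complex.conj_I, hcE, hcF, mul_neg, neg_mul, div_neg, neg_neg,
      ← mul_div_assoc, div_mul_eq_mul_div, ← sub_div, ← add_div, ← neg_div]
    rw [div_eq_iff hn]
    linear_combination (-(Complex.exp (Complex.I * k * x) * Complex.exp (-(Complex.I * k * x)))) * hW1 + (Complex.exp (Complex.I * k * x) * Complex.exp (-(Complex.I * k * x))) * hW2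
  · simp only [Fin.zero_eta, Fin.mk_one, Fin.reduceFinMk, herm4, Matrix.cons_val_zero,
      Matrix.cons_val_one, Matrix.head_cons, Matrix.cons_val_two, Matrix.tail_cons,
      Matrix.cons_val_three, Matrix.of_apply, map_mul, map_div₀, map_neg, map_ofNat,
      Complex.conj_ofReal, Complex.conj_I, hcE, hcF, mul_neg, neg_mul, div_neg, neg_neg,
      ← mul_div_assoc, div_mul_eq_mul_div, ← sub_div, ← add_div, ← neg_div]
    rw [div_eq_iff hn]
    linear_combination ((Complex.I * (k:ℂ)) * (Complex.exp (Complex.I * k * x) * Complex.exp (-(Complex.I * k * x)))) * hW1 + ((Complex.I * (k:ℂ)) * (Complex.exp (Complex.I * k * x) * Complex.exp (-(Complex.I * k * x)))) * hW2 + (2 * Complex.I * (k:ℂ) * (Wr:ℂ)) * hEF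
  · simp only [Fin.zero_eta, Fin.mk_one, Fin.reduceFinMk, herm4, Matrix.cons_val_zero,
      Matrix.cons_val_one, Matrix.head_cons, Matrix.cons_val_two, Matrix.tail_cons,
      Matrix.cons_val_three, Matrix.of_apply, map_mul, map_div₀, map_neg, map_ofNat,
      Complex.conj_ofReal, Complex.conj_I, hcE, hcF, mul_neg, neg_mul, div_neg, neg_neg,
      ← mul_div_assoc, div_mul_eq_mul_div, ← sub_div, ← add_div, ← neg_div]
    rw [div_eq_iff hn]
    ring
  · simp only [Fin.zero_eta, Fin.mk_one, Fin.reduceFinMk, herm4, Matrix.cons_val_zero,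
      Matrix.cons_val_one, Matrix.head_cons, Matrix.cons_val_two, Matrix.tail_cons,
      Matrix.cons_val_three, Matrix.of_apply, map_mul, map_div₀, map_neg, map_ofNat,
      Complex.conj_ofReal, Complex.conj_I, hcE, hcF, mul_neg, neg_mul, div_neg, neg_neg,
      ← mul_div_assoc, div_mul_eq_mul_div, ← sub_div, ← add_div, ← neg_div]
    rw [div_eq_iff hn]
    ring
  · simp only [Fin.zero_eta, Fin.mk_one, Fin.reduceFinMk, herm4, Matrix.cons_val_zero,
      Matrix.cons_val_one, Matrix.head_cons, Matrix.cons_val_two, Matrix.tail_cons,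
      Matrix.cons_val_three, Matrix.of_apply, map_mul, map_div₀, map_neg, map_ofNat,
      Complex.conj_ofReal, Complex.conj_I, hcE, hcF, mul_neg, neg_mul, div_neg, neg_neg,
      ← mul_div_assoc, div_mul_eq_mul_div, ← sub_div, ← add_div, ← neg_div]
    rw [div_eq_iff hn]
    linear_combination (-(Complex.I * (k:ℂ)) * (Complex.exp (Complex.I * k * x) * Complex.exp (-(Complex.I * k * x)))) * hW1 + (-(Complex.I * (k:ℂ)) * (Complex.exp (Complex.I * k * x) * Complex.exp (-(Complex.I * k * x)))) * hW2 + (-(2 * Complex.I * (k:ℂ) * (Wr:ℂ))) * hEF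
  · simp only [Fin.zero_eta, Fin.mk_one, Fin.reduceFinMk, herm4, Matrix.cons_val_zero,
      Matrix.cons_val_one, Matrix.head_cons, Matrix.cons_val_two, Matrix.tail_cons,
      Matrix.cons_val_three, Matrix.of_apply, map_mul, map_div₀, map_neg, map_ofNat,
      Complex.conj_ofReal, Complex.conj_I, hcE, hcF, mul_neg, neg_mul, div_neg, neg_neg,
      ← mul_div_assoc, div_mul_eq_mul_div, ← sub_div, ← add_div, ← neg_div]
    rw [div_eq_iff hn]
    linear_combination (Complex.I^2 * (k:ℂ)^2 * (Complex.exp (Complex.I * k * x) * Complex.exp (-(Complex.I * k * x)))) * hW1 + (-(Complex.I^2) * (k:ℂ)^2 * (Complex.exp (Complex.I * k * x) * Complex.exp (-(Complex.I * k * x)))) * hW2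
  · simp only [Fin.zero_eta, Fin.mk_one, Fin.reduceFinMk, herm4, Matrix.cons_val_zero,
      Matrix.cons_val_one, Matrix.head_cons, Matrix.cons_val_two, Matrix.tail_cons,
      Matrix.cons_val_three, Matrix.of_apply, map_mul, map_div₀, map_neg, map_ofNat,
      Complex.conj_ofReal, Complex.conj_I, hcE, hcF, mul_neg, neg_mul, div_neg, neg_neg,
      ← mul_div_assoc, div_mul_eq_mul_div, ← sub_div, ← add_div, ← neg_div]
    rw [div_eq_iff hn]
    ring
  · simp only [Fin.zero_eta, Fin.mk_one, Fin.reduceFinMk, herm4, Matrix.cons_val_zero,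
      Matrix.cons_val_one, Matrix.head_cons, Matrix.cons_val_two, Matrix.tail_cons,
      Matrix.cons_val_three, Matrix.of_apply, map_mul, map_div₀, map_neg, map_ofNat,
      Complex.conj_ofReal, Complex.conj_I, hcE, hcF, mul_neg, neg_mul, div_neg, neg_neg,
      ← mul_div_assoc, div_mul_eq_mul_div, ← sub_div, ← add_div, ← neg_div]
    rw [div_eq_iff hn]
    ring

set_option maxHeartbeats 2000000 in
lemma det_calc (k Wr x : ℝ) (hk : k ≠ 0) (hWr : Wr ≠ 0) (a b c d a' b' c' d' : ℝ)
    (hW1 : (a:ℂ) * d' - (d:ℂ) * a' = (Wr:ℂ)) (hW2 : (b:ℂ) * c' - (c:ℂ) * b' = (Wr:ℂ)) :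
    Matrix.det (Matrix.of (![![Complex.exp (Complex.I * k * x) * (a:ℂ), Complex.exp (-(Complex.I * k * x)) * (b:ℂ), Complex.exp (-(Complex.I * k * x)) * (c:ℂ) / (2 * Complex.I * (k:ℂ) * (Wr:ℂ)), Complex.exp (Complex.I * k * x) * (d:ℂ) / (2 * Complex.I * (k:ℂ) * (Wr:ℂ))],
        ![Complex.I * k * (Complex.exp (Complex.I * k * x) * (a:ℂ)), -(Complex.I * k) * (Complex.exp (-(Complex.I * k * x)) * (b:ℂ)),
          -(Complex.I * k) * (Complex.exp (-(Complex.I * k * x)) * (c:ℂ)) / (2 * Complex.I * (k:ℂ) * (Wr:ℂ)), Complex.I * k * (Complex.exp (Complex.I * k * x) * (d:ℂ)) / (2 * Complex.I * (k:ℂ) * (Wr:ℂ))],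
        ![Complex.exp (Complex.I * k * x) * (a':ℂ), Complex.exp (-(Complex.I * k * x)) * (b':ℂ), Complex.exp (-(Complex.I * k * x)) * (c':ℂ) / (2 * Complex.I * (k:ℂ) * (Wr:ℂ)), Complex.exp (Complex.I * k * x) * (d':ℂ) / (2 * Complex.I * (k:ℂ) * (Wr:ℂ))],
        ![Complex.I * k * (Complex.exp (Complex.I * k * x) * (a':ℂ)), -(Complex.I * k) * (Complex.exp (-(Complex.I * k * x)) * (b':ℂ)),
          -(Complex.I * k) * (Complex.exp (-(Complex.I * k * x)) * (c':ℂ)) / (2 * Complex.I * (k:ℂ) * (Wr:ℂ)), Complex.I * k * (Complex.exp (Complex.I * k * x) * (d':ℂ)) / (2 * Complex.I * (k:ℂ) * (Wr:ℂ))]])) = -1 := by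
  have hEF : Complex.exp (Complex.I * k * x) * Complex.exp (-(Complex.I * k * x)) = 1 := by
    rw [← Complex.exp_add]; simp
  have hk' : (k:ℂ) ≠ 0 := Complex.ofReal_ne_zero.mpr hk
  have hWr' : (Wr:ℂ) ≠ 0 := Complex.ofReal_ne_zero.mpr hWr
  have hn : (2 * Complex.I * (k:ℂ) * (Wr:ℂ)) ≠ 0 := by
    simp [Complex.I_ne_zero, hk', hWr']
  simp [Matrix.det_succ_row_zero, Fin.sum_univ_succ, Fin.succAbove, Fin.castSucc, Fin.castAdd, Fin.castLE]
  simp only [Matrix.cons_val_zero, Matrix.cons_val_one, Matrix.head_cons, Matrix.cons_val_two,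
    Matrix.tail_cons, Matrix.cons_val_three, Matrix.of_apply, Matrix.cons_val', Matrix.empty_val',
    Matrix.cons_val_fin_one, Matrix.head_fin_const,
    mul_neg, neg_mul, div_neg, neg_neg, div_mul_div_comm, div_div,
    ← mul_div_assoc, div_mul_eq_mul_div, ← sub_div, ← add_div, ← neg_div]
  rw [div_eq_iff (mul_ne_zero hn hn)]
  linear_combination (-4*Complex.I^2*(k:ℂ)^2*(Complex.exp (Complex.I * k * x) * Complex.exp (-(Complex.I * k * x)))^2*((b:ℂ)*c' - (c:ℂ)*b')) * hW1
    + (-4*Complex.I^2*(k:ℂ)^2*(Complex.exp (Complex.I * k * x) * Complex.exp (-(Complex.I * k * x)))^2*(Wr:ℂ)) * hW2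
    + (-4*Complex.I^2*(k:ℂ)^2*(Wr:ℂ)^2*((Complex.exp (Complex.I * k * x) * Complex.exp (-(Complex.I * k * x))) + 1)) * hEF


/-- the ℂ⁴-valued function built from two Hermite solutions with
constant nonzero Wronskian is a normalized null tetrad: it realizes the
prescribed pseudo-Hermitian Gram matrix and has determinant −1. -/
theorem statement_17 (k lam Wr : ℝ) (hk : k ≠ 0) (hWr : Wr ≠ 0)
    (ψ₁ ψ₂ : ℝ → ℝ)
    (hψ₁ : Differentiable ℝ ψ₁) (hψ₁' : Differentiable ℝ (deriv ψ₁))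
    (hψ₂ : Differentiable ℝ ψ₂) (hψ₂' : Differentiable ℝ (deriv ψ₂))
    (hherm₁ : ∀ t, deriv (deriv ψ₁) t = (t ^ 2 - 2 * lam) * ψ₁ t)
    (hherm₂ : ∀ t, deriv (deriv ψ₂) t = (t ^ 2 - 2 * lam) * ψ₂ t)
    (hWron : ∀ t, ψ₁ t * deriv ψ₂ t - ψ₂ t * deriv ψ₁ t = Wr)
    (ψ : ℝ → ℝ → Fin 4 → ℂ)
    (hψ : ∀ x y, ψ x y
        = ![Complex.exp (Complex.I * k * x) * ((ψ₁ (y + k) : ℝ) : ℂ),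
            Complex.exp (-(Complex.I * k * x)) * ((ψ₁ (y - k) : ℝ) : ℂ),
            Complex.exp (-(Complex.I * k * x)) * ((ψ₂ (y - k) : ℝ) : ℂ)
              / (2 * Complex.I * (k : ℂ) * (Wr : ℂ)),
            Complex.exp (Complex.I * k * x) * ((ψ₂ (y + k) : ℝ) : ℂ)
              / (2 * Complex.I * (k : ℂ) * (Wr : ℂ))]) :
    (∀ x y, ∀ i j : Fin 4,
      herm4 (![ψ x y, pd1 ψ x y, pd2 ψ x y, pd1 (pd2 ψ) x y] i)
            (![ψ x y, pd1 ψ x y, pd2 ψ x y, pd1 (pd2 ψ) x y] j)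
        = !![(0:ℂ), 0, 0, -1; 0, 0, 1, 0; 0, 1, 0, 0; -1, 0, 0, 0] i j) ∧
    (∀ x y, Matrix.det (Matrix.of ![ψ x y, pd1 ψ x y, pd2 ψ x y, pd1 (pd2 ψ) x y]) = -1) := by
  have hA : ∀ x y, pd1 ψ x y = ![Complex.I * k * (Complex.exp (Complex.I * k * x) * ((ψ₁ (y + k) : ℝ) : ℂ)),
      -(Complex.I * k) * (Complex.exp (-(Complex.I * k * x)) * ((ψ₁ (y - k) : ℝ) : ℂ)),
      -(Complex.I * k) * (Complex.exp (-(Complex.I * k * x)) * ((ψ₂ (y - k) : ℝ) : ℂ)) / (2 * Complex.I * (k : ℂ) * (Wr : ℂ)),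
      Complex.I * k * (Complex.exp (Complex.I * k * x) * ((ψ₂ (y + k) : ℝ) : ℂ)) / (2 * Complex.I * (k : ℂ) * (Wr : ℂ))] :=
    pd1_formula k (2 * Complex.I * (k : ℂ) * (Wr : ℂ)) ψ _ _ _ _ hψ
  have hB : ∀ x y, pd2 ψ x y = ![Complex.exp (Complex.I * k * x) * ((deriv ψ₁ (y + k) : ℝ) : ℂ),
      Complex.exp (-(Complex.I * k * x)) * ((deriv ψ₁ (y - k) : ℝ) : ℂ),
      Complex.exp (-(Complex.I * k * x)) * ((deriv ψ₂ (y - k) : ℝ) : ℂ) / (2 * Complex.I * (k : ℂ) * (Wr : ℂ)),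
      Complex.exp (Complex.I * k * x) * ((deriv ψ₂ (y + k) : ℝ) : ℂ)  / (2 * Complex.I * (k : ℂ) * (Wr : ℂ))] :=
    pd2_formula k (2 * Complex.I * (k : ℂ) * (Wr : ℂ)) ψ ψ₁ ψ₂ hψ₁ hψ₂ hψ
  have hC : ∀ x y, pd1 (pd2 ψ) x y = ![Complex.I * k * (Complex.exp (Complex.I * k * x) * ((deriv ψ₁ (y + k) : ℝ) : ℂ)),
      -(Complex.I * k) * (Complex.exp (-(Complex.I * k * x)) * ((deriv ψ₁ (y - k) : ℝ) : ℂ)),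
      -(Complex.I * k) * (Complex.exp (-(Complex.I * k * x)) * ((deriv ψ₂ (y - k) : ℝ) : ℂ)) / (2 * Complex.I * (k : ℂ) * (Wr : ℂ)),
      Complex.I * k * (Complex.exp (Complex.I * k * x) * ((deriv ψ₂ (y + k) : ℝ) : ℂ)) / (2 * Complex.I * (k : ℂ) * (Wr : ℂ))] :=
    pd1_formula k (2 * Complex.I * (k : ℂ) * (Wr : ℂ)) (pd2 ψ) _ _ _ _ hB
  constructor
  · intro x y i j
    have hW1 : ((ψ₁ (y + k) : ℝ) : ℂ) * ((deriv ψ₂ (y + k) : ℝ) : ℂ)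
        - ((ψ₂ (y + k) : ℝ) : ℂ) * ((deriv ψ₁ (y + k) : ℝ) : ℂ) = (Wr : ℂ) := by
      exact_mod_cast congrArg Complex.ofReal (hWron (y + k))
    have hW2 : ((ψ₁ (y - k) : ℝ) : ℂ) * ((deriv ψ₂ (y - k) : ℝ) : ℂ)
        - ((ψ₂ (y - k) : ℝ) : ℂ) * ((deriv ψ₁ (y - k) : ℝ) : ℂ) = (Wr : ℂ) := by
      exact_mod_cast congrArg Complex.ofReal (hWron (y - k))
    rw [hψ, hA, hB, hC]
    exact gram_calc k Wr x hk hWr _ _ _ _ _ _ _ _ hW1 hW2 i j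
  · intro x y
    have hW1 : ((ψ₁ (y + k) : ℝ) : ℂ) * ((deriv ψ₂ (y + k) : ℝ) : ℂ)
        - ((ψ₂ (y + k) : ℝ) : ℂ) * ((deriv ψ₁ (y + k) : ℝ) : ℂ) = (Wr : ℂ) := by
      exact_mod_cast congrArg Complex.ofReal (hWron (y + k))
    have hW2 : ((ψ₁ (y - k) : ℝ) : ℂ) * ((deriv ψ₂ (y - k) : ℝ) : ℂ)
        - ((ψ₂ (y - k) : ℝ) : ℂ) * ((deriv ψ₁ (y - k) : ℝ) : ℂ) = (Wr : ℂ) := by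
      exact_mod_cast congrArg Complex.ofReal (hWron (y - k))
    rw [hψ, hA, hB, hC]
    exact det_calc k Wr x hk hWr _ _ _ _ _ _ _ _ hW1 hW2
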